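/- Let M = U ×_f V be a warped product whose metric g is super generalized recurrent (SGK_n) with associated 1-forms (Π, Φ, Ψ, Θ). Then at every point x ∈ M at which df ≠ 0 (i.e. f_a ≠ 0 at x for some a ∈ {1,…,p}), the fiber metric g̃ is of constant curvature at x: there exists a real number c such that R̃_{αβγδ} = c G̃_{αβγδ} at x for all indices α,β,γ,δ, where G̃_{αβγδ} = g̃_{αδ} g̃_{βγ} − g̃_{αγ} g̃_{βδ}. -/

import Mathlib

noncomputable section

/-- Partial derivative of a scalar function along the `j`-th coordinate direction. -/
def pd {k : ℕ} (F : (Fin k → ℝ) → ℝ) (j : Fin k) (x : Fin k → ℝ) : ℝ :=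
  fderiv ℝ F x (Pi.single j 1)

/-- Christoffel symbols `Γ^i_{jl}` of a metric `h` with (pointwise) inverse `hinv`. -/
def Christoffel {k : ℕ} (h hinv : (Fin k → ℝ) → Fin k → Fin k → ℝ)
    (i j l : Fin k) (x : Fin k → ℝ) : ℝ :=
  (1 / 2) * ∑ r, hinv x i r *
    (pd (fun y => h y r l) j x + pd (fun y => h y j r) l x - pd (fun y => h y j l) r x)

/-- The (0,4) Riemann-Christoffel curvature tensor of `h`. -/
def Riem {k : ℕ} (h hinv : (Fin k → ℝ) → Fin k → Fin k → ℝ)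
    (x : Fin k → ℝ) (i j s l : Fin k) : ℝ :=
  ∑ r, h x i r *
    (pd (Christoffel h hinv r l j) s x - pd (Christoffel h hinv r s j) l x
      + (∑ t, Christoffel h hinv r s t x * Christoffel h hinv t l j x)
      - ∑ t, Christoffel h hinv r l t x * Christoffel h hinv t s j x)

/-- The Ricci tensor of `h`. -/
def Ric {k : ℕ} (h hinv : (Fin k → ℝ) → Fin k → Fin k → ℝ)
    (x : Fin k → ℝ) (j l : Fin k) : ℝ :=
  ∑ i, ∑ s, hinv x i s * Riem h hinv x i j s l

/-- The scalar curvature of `h`. -/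
def Scal {k : ℕ} (h hinv : (Fin k → ℝ) → Fin k → Fin k → ℝ) (x : Fin k → ℝ) : ℝ :=
  ∑ j, ∑ l, hinv x j l * Ric h hinv x j l

/-- Covariant derivative (w.r.t. the Levi-Civita connection of `h`) of a (0,4) tensor field. -/
def cov4 {k : ℕ} (h hinv : (Fin k → ℝ) → Fin k → Fin k → ℝ)
    (T : (Fin k → ℝ) → Fin k → Fin k → Fin k → Fin k → ℝ)
    (x : Fin k → ℝ) (i j s l m : Fin k) : ℝ :=
  pd (fun y => T y i j s l) m x
    - (∑ r, Christoffel h hinv r m i x * T x r j s l)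
    - (∑ r, Christoffel h hinv r m j x * T x i r s l)
    - (∑ r, Christoffel h hinv r m s x * T x i j r l)
    - ∑ r, Christoffel h hinv r m l x * T x i j s r

/-- Covariant derivative of a (0,2) tensor field. -/
def cov2 {k : ℕ} (h hinv : (Fin k → ℝ) → Fin k → Fin k → ℝ)
    (T : (Fin k → ℝ) → Fin k → Fin k → ℝ) (x : Fin k → ℝ) (i j m : Fin k) : ℝ :=
  pd (fun y => T y i j) m x
    - (∑ r, Christoffel h hinv r m i x * T x r j)
    - ∑ r, Christoffel h hinv r m j x * T x i r

/-- Kulkarni-Nomizu product of two (0,2) tensors. -/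
def KN {k : ℕ} (A E : (Fin k → ℝ) → Fin k → Fin k → ℝ)
    (x : Fin k → ℝ) (i j s l : Fin k) : ℝ :=
  A x i l * E x j s + A x j s * E x i l - A x i s * E x j l - A x j l * E x i s

/-- The Gaussian curvature tensor `G_{ijsl} = h_{il}h_{js} - h_{is}h_{jl}`. -/
def Gt {k : ℕ} (h : (Fin k → ℝ) → Fin k → Fin k → ℝ)
    (x : Fin k → ℝ) (i j s l : Fin k) : ℝ :=
  h x i l * h x j s - h x i s * h x j l

/-- The conformal (Weyl) curvature tensor of a `k`-dimensional metric `h`. -/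
def Weyl {k : ℕ} (h hinv : (Fin k → ℝ) → Fin k → Fin k → ℝ)
    (x : Fin k → ℝ) (i j s l : Fin k) : ℝ :=
  Riem h hinv x i j s l - (1 / ((k : ℝ) - 2)) * KN h (Ric h hinv) x i j s l
    + (Scal h hinv x / (2 * ((k : ℝ) - 1) * ((k : ℝ) - 2))) * KN h h x i j s l

/-- Recurrency condition at a point. -/
def Recur {k : ℕ} (h hinv : (Fin k → ℝ) → Fin k → Fin k → ℝ)
    (piF : (Fin k → ℝ) → Fin k → ℝ) (x : Fin k → ℝ) : Prop :=
  ∀ i j s l m, cov4 h hinv (Riem h hinv) x i j s l m = piF x m * Riem h hinv x i j s l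

/-- Hyper generalized recurrency condition at a point. -/
def HGK {k : ℕ} (h hinv : (Fin k → ℝ) → Fin k → Fin k → ℝ)
    (piF psiF : (Fin k → ℝ) → Fin k → ℝ) (x : Fin k → ℝ) : Prop :=
  ∀ i j s l m, cov4 h hinv (Riem h hinv) x i j s l m =
    piF x m * Riem h hinv x i j s l + psiF x m * KN h (Ric h hinv) x i j s l

/-- Weakly generalized recurrency condition at a point. -/
def WGK {k : ℕ} (h hinv : (Fin k → ℝ) → Fin k → Fin k → ℝ)
    (piF phiF : (Fin k → ℝ) → Fin k → ℝ) (x : Fin k → ℝ) : Prop :=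
  ∀ i j s l m, cov4 h hinv (Riem h hinv) x i j s l m =
    piF x m * Riem h hinv x i j s l
      + phiF x m * KN (Ric h hinv) (Ric h hinv) x i j s l

/-- Super generalized recurrency condition at a point. -/
def SGK {k : ℕ} (h hinv : (Fin k → ℝ) → Fin k → Fin k → ℝ)
    (piF phiF psiF thetaF : (Fin k → ℝ) → Fin k → ℝ) (x : Fin k → ℝ) : Prop :=
  ∀ i j s l m, cov4 h hinv (Riem h hinv) x i j s l m =
    piF x m * Riem h hinv x i j s l
      + phiF x m * KN (Ric h hinv) (Ric h hinv) x i j s l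
      + psiF x m * KN h (Ric h hinv) x i j s l
      + thetaF x m * KN h h x i j s l

/-- Base-point projection of a point of `M = U × V`. -/
def bpt {p q : ℕ} (z : Fin (p + q) → ℝ) : Fin p → ℝ := fun a => z (Fin.castAdd q a)

/-- Fiber-point projection of a point of `M = U × V`. -/
def fpt {p q : ℕ} (z : Fin (p + q) → ℝ) : Fin q → ℝ := fun a => z (Fin.natAdd p a)

/-- Block-diagonal combination of a base tensor `A` and a fiber tensor `B` scaled by `c`. -/
def wPair {p q : ℕ} (A : (Fin p → ℝ) → Fin p → Fin p → ℝ)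
    (B : (Fin q → ℝ) → Fin q → Fin q → ℝ) (c : (Fin p → ℝ) → ℝ)
    (z : Fin (p + q) → ℝ) (i j : Fin (p + q)) : ℝ :=
  Sum.elim
    (fun a => Sum.elim (fun b => A (bpt z) a b) (fun _ => (0 : ℝ)) (finSumFinEquiv.symm j))
    (fun a => Sum.elim (fun _ => (0 : ℝ)) (fun b => c (bpt z) * B (fpt z) a b)
      (finSumFinEquiv.symm j))
    (finSumFinEquiv.symm i)

/-- The warped product metric `g = ḡ ⊕ f g̃`. -/
def wMet {p q : ℕ} (gbar : (Fin p → ℝ) → Fin p → Fin p → ℝ)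
    (gtil : (Fin q → ℝ) → Fin q → Fin q → ℝ) (f : (Fin p → ℝ) → ℝ) :
    (Fin (p + q) → ℝ) → Fin (p + q) → Fin (p + q) → ℝ :=
  wPair gbar gtil f

/-- The inverse of the warped product metric. -/
def wMetInv {p q : ℕ} (gbinv : (Fin p → ℝ) → Fin p → Fin p → ℝ)
    (gtinv : (Fin q → ℝ) → Fin q → Fin q → ℝ) (f : (Fin p → ℝ) → ℝ) :
    (Fin (p + q) → ℝ) → Fin (p + q) → Fin (p + q) → ℝ :=
  wPair gbinv gtinv fun x => (f x)⁻¹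

/-- The set of points of `M = U × V` inside `ℝ^{p+q}`. -/
def Mset {p q : ℕ} (U : Set (Fin p → ℝ)) (V : Set (Fin q → ℝ)) : Set (Fin (p + q) → ℝ) :=
  {z | bpt z ∈ U ∧ fpt z ∈ V}

/-- The tensor `T_{ab} = -(1/(2f))(f_{a,b} - (1/(2f)) f_a f_b)`. -/
def Tten {p : ℕ} (gbar gbinv : (Fin p → ℝ) → Fin p → Fin p → ℝ) (f : (Fin p → ℝ) → ℝ)
    (x : Fin p → ℝ) (a b : Fin p) : ℝ :=
  -(1 / (2 * f x)) *
    ((pd (fun y => pd f a y) b x - ∑ c, Christoffel gbar gbinv c b a x * pd f c x)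
      - (1 / (2 * f x)) * pd f a x * pd f b x)

/-- `tr T = ḡ^{ab} T_{ab}`. -/
def trT {p : ℕ} (gbar gbinv : (Fin p → ℝ) → Fin p → Fin p → ℝ) (f : (Fin p → ℝ) → ℝ)
    (x : Fin p → ℝ) : ℝ :=
  ∑ a, ∑ b, gbinv x a b * Tten gbar gbinv f x a b

/-- `P = (1/(4f²)) ḡ^{ab} f_a f_b`. -/
def Pw {p : ℕ} (gbinv : (Fin p → ℝ) → Fin p → Fin p → ℝ) (f : (Fin p → ℝ) → ℝ)
    (x : Fin p → ℝ) : ℝ :=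
  (1 / (4 * f x ^ 2)) * ∑ a, ∑ b, gbinv x a b * pd f a x * pd f b x

/-- `Q = f((n-p-1)P - tr T)`, with `n - p = q`. -/
def Qw {p : ℕ} (q : ℕ) (gbar gbinv : (Fin p → ℝ) → Fin p → Fin p → ℝ)
    (f : (Fin p → ℝ) → ℝ) (x : Fin p → ℝ) : ℝ :=
  f x * (((q : ℝ) - 1) * Pw gbinv f x - trT gbar gbinv f x)

namespace WPaux

open Fin Filter

/-! ### Linear projections -/

def bptL (p q : ℕ) : (Fin (p + q) → ℝ) →L[ℝ] (Fin p → ℝ) :=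
  ContinuousLinearMap.pi fun a => ContinuousLinearMap.proj (Fin.castAdd q a)

def fptL (p q : ℕ) : (Fin (p + q) → ℝ) →L[ℝ] (Fin q → ℝ) :=
  ContinuousLinearMap.pi fun a => ContinuousLinearMap.proj (Fin.natAdd p a)

lemma bpt_eq {p q : ℕ} (z : Fin (p + q) → ℝ) : bpt z = bptL p q z := rfl
lemma fpt_eq {p q : ℕ} (z : Fin (p + q) → ℝ) : fpt z = fptL p q z := rfl

lemma isOpen_Mset {p q : ℕ} {U : Set (Fin p → ℝ)} {V : Set (Fin q → ℝ)}
    (hU : IsOpen U) (hV : IsOpen V) : IsOpen (Mset U V) := by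
  have : Mset U V = (bptL p q) ⁻¹' U ∩ (fptL p q) ⁻¹' V := rfl
  rw [this]
  exact ((hU.preimage (bptL p q).continuous).inter (hV.preimage (fptL p q).continuous))

lemma bptL_single_base {p q : ℕ} (a : Fin p) :
    bptL p q (Pi.single (Fin.castAdd q a) (1 : ℝ)) = Pi.single a 1 := by
  funext b
  simp [bptL, Pi.single_apply, Fin.ext_iff]

lemma bptL_single_fiber {p q : ℕ} (α : Fin q) :
    bptL p q (Pi.single (Fin.natAdd p α) (1 : ℝ)) = 0 := by
  funext b
  have hne : (b : ℕ) ≠ p + (α : ℕ) := by omega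
  simp [bptL, Pi.single_apply, Fin.ext_iff, hne]

lemma fptL_single_base {p q : ℕ} (a : Fin p) :
    fptL p q (Pi.single (Fin.castAdd q a) (1 : ℝ)) = 0 := by
  funext β
  have hne : p + (β : ℕ) ≠ (a : ℕ) := by omega
  simp [fptL, Pi.single_apply, Fin.ext_iff, hne]

lemma fptL_single_fiber {p q : ℕ} (α : Fin q) :
    fptL p q (Pi.single (Fin.natAdd p α) (1 : ℝ)) = Pi.single α 1 := by
  funext β
  simp [fptL, Pi.single_apply, Fin.ext_iff]

/-! ### pd calculus -/

lemma pd_congr {k : ℕ} {F G : (Fin k → ℝ) → ℝ} {s : Set (Fin k → ℝ)} (hs : IsOpen s)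
    {x : Fin k → ℝ} (hx : x ∈ s) (h : ∀ y ∈ s, F y = G y) (j : Fin k) :
    pd F j x = pd G j x := by
  unfold pd
  rw [Filter.EventuallyEq.fderiv_eq (Filter.eventuallyEq_of_mem (hs.mem_nhds hx) h)]

lemma pd_const {k : ℕ} (c : ℝ) (j : Fin k) (x : Fin k → ℝ) :
    pd (fun _ => c) j x = 0 := by simp [pd]

lemma pd_zero_of_eqOn {k : ℕ} {F : (Fin k → ℝ) → ℝ} {s : Set (Fin k → ℝ)} (hs : IsOpen s)
    {x : Fin k → ℝ} (hx : x ∈ s) (h : ∀ y ∈ s, F y = 0) (j : Fin k) :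
    pd F j x = 0 := by
  rw [pd_congr hs hx h j, pd_const]

lemma pd_mul {k : ℕ} {F G : (Fin k → ℝ) → ℝ} {x : Fin k → ℝ}
    (hF : DifferentiableAt ℝ F x) (hG : DifferentiableAt ℝ G x) (j : Fin k) :
    pd (fun y => F y * G y) j x = pd F j x * G x + F x * pd G j x := by
  unfold pd
  rw [fderiv_fun_mul hF hG]
  simp only [ContinuousLinearMap.add_apply, ContinuousLinearMap.smul_apply, smul_eq_mul]
  ring

lemma diffAt_comp_bpt {p q : ℕ} {F : (Fin p → ℝ) → ℝ} {z : Fin (p + q) → ℝ}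
    (hF : DifferentiableAt ℝ F (bpt z)) :
    DifferentiableAt ℝ (fun y => F (bpt y)) z :=
  hF.comp z (bptL p q).differentiableAt

lemma diffAt_comp_fpt {p q : ℕ} {F : (Fin q → ℝ) → ℝ} {z : Fin (p + q) → ℝ}
    (hF : DifferentiableAt ℝ F (fpt z)) :
    DifferentiableAt ℝ (fun y => F (fpt y)) z :=
  hF.comp z (fptL p q).differentiableAt

lemma pd_comp_bpt {p q : ℕ} {F : (Fin p → ℝ) → ℝ} {z : Fin (p + q) → ℝ}
    (hF : DifferentiableAt ℝ F (bpt z)) (j : Fin (p + q)) :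
    pd (fun y => F (bpt y)) j z = fderiv ℝ F (bpt z) (bptL p q (Pi.single j 1)) := by
  unfold pd
  have h1 : (fun y => F (bpt y)) = F ∘ (bptL p q) := rfl
  rw [h1, fderiv_comp (g := F) (f := ⇑(bptL p q)) z hF ((bptL p q).differentiableAt)]
  simp only [ContinuousLinearMap.coe_comp', Function.comp_apply, ContinuousLinearMap.fderiv]
  rfl

lemma pd_comp_bpt_base {p q : ℕ} {F : (Fin p → ℝ) → ℝ} {z : Fin (p + q) → ℝ}
    (hF : DifferentiableAt ℝ F (bpt z)) (a : Fin p) :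
    pd (fun y => F (bpt y)) (Fin.castAdd q a) z = pd F a (bpt z) := by
  rw [pd_comp_bpt hF, bptL_single_base]; rfl

lemma pd_comp_bpt_fiber {p q : ℕ} {F : (Fin p → ℝ) → ℝ} {z : Fin (p + q) → ℝ}
    (hF : DifferentiableAt ℝ F (bpt z)) (α : Fin q) :
    pd (fun y => F (bpt y)) (Fin.natAdd p α) z = 0 := by
  rw [pd_comp_bpt hF, bptL_single_fiber]
  simp

lemma pd_comp_fpt {p q : ℕ} {F : (Fin q → ℝ) → ℝ} {z : Fin (p + q) → ℝ}
    (hF : DifferentiableAt ℝ F (fpt z)) (j : Fin (p + q)) :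
    pd (fun y => F (fpt y)) j z = fderiv ℝ F (fpt z) (fptL p q (Pi.single j 1)) := by
  unfold pd
  have h1 : (fun y => F (fpt y)) = F ∘ (fptL p q) := rfl
  rw [h1, fderiv_comp (g := F) (f := ⇑(fptL p q)) z hF ((fptL p q).differentiableAt)]
  simp only [ContinuousLinearMap.coe_comp', Function.comp_apply, ContinuousLinearMap.fderiv]
  rfl

lemma pd_comp_fpt_base {p q : ℕ} {F : (Fin q → ℝ) → ℝ} {z : Fin (p + q) → ℝ}
    (hF : DifferentiableAt ℝ F (fpt z)) (a : Fin p) :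
    pd (fun y => F (fpt y)) (Fin.castAdd q a) z = 0 := by
  rw [pd_comp_fpt hF, fptL_single_base]
  simp

lemma pd_comp_fpt_fiber {p q : ℕ} {F : (Fin q → ℝ) → ℝ} {z : Fin (p + q) → ℝ}
    (hF : DifferentiableAt ℝ F (fpt z)) (α : Fin q) :
    pd (fun y => F (fpt y)) (Fin.natAdd p α) z = pd F α (fpt z) := by
  rw [pd_comp_fpt hF, fptL_single_fiber]; rfl

lemma pd_mul_bf_base {p q : ℕ} {F : (Fin p → ℝ) → ℝ} {G : (Fin q → ℝ) → ℝ}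
    {z : Fin (p + q) → ℝ} (hF : DifferentiableAt ℝ F (bpt z))
    (hG : DifferentiableAt ℝ G (fpt z)) (a : Fin p) :
    pd (fun y => F (bpt y) * G (fpt y)) (Fin.castAdd q a) z = pd F a (bpt z) * G (fpt z) := by
  rw [pd_mul (diffAt_comp_bpt hF) (diffAt_comp_fpt hG), pd_comp_bpt_base hF,
    pd_comp_fpt_base hG]
  ring

lemma pd_mul_bf_fiber {p q : ℕ} {F : (Fin p → ℝ) → ℝ} {G : (Fin q → ℝ) → ℝ}
    {z : Fin (p + q) → ℝ} (hF : DifferentiableAt ℝ F (bpt z))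
    (hG : DifferentiableAt ℝ G (fpt z)) (α : Fin q) :
    pd (fun y => F (bpt y) * G (fpt y)) (Fin.natAdd p α) z = F (bpt z) * pd G α (fpt z) := by
  rw [pd_mul (diffAt_comp_bpt hF) (diffAt_comp_fpt hG), pd_comp_bpt_fiber hF,
    pd_comp_fpt_fiber hG]
  ring

end WPaux
namespace WPaux

open Filter

lemma one_le_inf : (1 : WithTop ℕ∞) ≤ ((⊤ : ℕ∞) : WithTop ℕ∞) := by
  exact_mod_cast le_top

lemma sum_delta_mul {k : ℕ} (a : Fin k) (T : Fin k → ℝ) :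
    (∑ r, (if a = r then (1 : ℝ) else 0) * T r) = T a := by
  simp [Finset.sum_ite_eq]

lemma sum_mul_delta {k : ℕ} (a : Fin k) (T : Fin k → ℝ) :
    (∑ r, T r * (if r = a then (1 : ℝ) else 0)) = T a := by
  simp [Finset.sum_ite_eq']

lemma inv_flip {k : ℕ} {A B : Fin k → Fin k → ℝ}
    (h : ∀ a b, (∑ c, A a c * B c b) = if a = b then (1 : ℝ) else 0) :
    ∀ a b, (∑ c, B a c * A c b) = if a = b then (1 : ℝ) else 0 := by
  have h1 : (Matrix.of A) * (Matrix.of B) = 1 := by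
    ext a b
    simp only [Matrix.mul_apply, Matrix.of_apply, Matrix.one_apply]
    exact h a b
  have h2 := mul_eq_one_comm.mp h1
  intro a b
  have := congrFun (congrFun h2 a) b
  simpa [Matrix.mul_apply, Matrix.one_apply] using this

lemma contDiffOn_finset_prod {k : ℕ} {s : Set (Fin k → ℝ)} {ι : Type*} (t : Finset ι)
    (F : ι → (Fin k → ℝ) → ℝ) (hF : ∀ i ∈ t, ContDiffOn ℝ (⊤ : ℕ∞) (F i) s) :
    ContDiffOn ℝ (⊤ : ℕ∞) (fun x => ∏ i ∈ t, F i x) s := by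
  classical
  induction t using Finset.cons_induction with
  | empty =>
    have : (fun x => ∏ i ∈ (∅ : Finset ι), F i x) = fun _ => (1 : ℝ) := by
      funext x; simp
    rw [this]; exact contDiffOn_const
  | cons a t ha ih =>
    simp only [Finset.prod_cons]
    exact (hF a (Finset.mem_cons_self _ _)).mul (ih fun i hi => hF i (Finset.mem_cons_of_mem hi))

lemma contDiffOn_det {k k' : ℕ} {s : Set (Fin k' → ℝ)} {A : (Fin k' → ℝ) → Matrix (Fin k) (Fin k) ℝ}
    (hA : ∀ i j, ContDiffOn ℝ (⊤ : ℕ∞) (fun x => A x i j) s) :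
    ContDiffOn ℝ (⊤ : ℕ∞) (fun x => (A x).det) s := by
  simp only [Matrix.det_apply']
  apply ContDiffOn.sum
  intro σ _
  exact contDiffOn_const.mul (contDiffOn_finset_prod _ _ fun i _ => hA (σ i) i)

lemma contDiffOn_adjugate {k k' : ℕ} {s : Set (Fin k' → ℝ)}
    {A : (Fin k' → ℝ) → Matrix (Fin k) (Fin k) ℝ}
    (hA : ∀ i j, ContDiffOn ℝ (⊤ : ℕ∞) (fun x => A x i j) s) (a b : Fin k) :
    ContDiffOn ℝ (⊤ : ℕ∞) (fun x => (A x).adjugate a b) s := by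
  simp only [Matrix.adjugate_apply]
  apply contDiffOn_det (A := fun x => (A x).updateRow b (Pi.single a 1))
  intro i j
  rcases eq_or_ne i b with rfl | hib
  · have h1 : (fun x => (A x).updateRow i (Pi.single a 1) i j) = fun _ => (Pi.single a 1 : Fin k → ℝ) j := by
      funext x; rw [Matrix.updateRow_self]
    rw [h1]; exact contDiffOn_const
  · have h1 : (fun x => (A x).updateRow b (Pi.single a 1) i j) = fun x => A x i j := by
      funext x; rw [Matrix.updateRow_ne hib]
    rw [h1]; exact hA i j

/-- From a smooth pointwise-invertible matrix of functions, the pointwise inverse entries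
are differentiable at interior points. -/
lemma inv_entries_diffAt {k k' : ℕ} {s : Set (Fin k' → ℝ)} (hs : IsOpen s)
    {A B : (Fin k' → ℝ) → Fin k → Fin k → ℝ}
    (hA : ∀ a b, ContDiffOn ℝ (⊤ : ℕ∞) (fun x => A x a b) s)
    (hAB : ∀ x ∈ s, ∀ a b, (∑ c, A x a c * B x c b) = if a = b then (1 : ℝ) else 0) :
    ∀ x ∈ s, ∀ a b, DifferentiableAt ℝ (fun x => B x a b) x := by
  classical
  set M : (Fin k' → ℝ) → Matrix (Fin k) (Fin k) ℝ := fun x => Matrix.of (A x) with hM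
  have hone : ∀ x ∈ s, M x * Matrix.of (B x) = 1 := by
    intro x hx
    ext a b
    simp only [Matrix.mul_apply, Matrix.of_apply, Matrix.one_apply, hM]
    exact hAB x hx a b
  have hdet : ∀ x ∈ s, (M x).det ≠ 0 := by
    intro x hx
    have h1 : (M x).det * (Matrix.of (B x)).det = 1 := by
      rw [← Matrix.det_mul, hone x hx, Matrix.det_one]
    intro h0; rw [h0, zero_mul] at h1; exact absurd h1 (by norm_num)
  have hBval : ∀ x ∈ s, ∀ a b, B x a b = ((M x).det)⁻¹ * (M x).adjugate a b := by
    intro x hx a b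
    have h1 : (M x)⁻¹ = Matrix.of (B x) := Matrix.inv_eq_right_inv (hone x hx)
    have h2 : (M x)⁻¹ a b = B x a b := by rw [h1]; rfl
    rw [← h2, Matrix.inv_def]
    simp [Ring.inverse_eq_inv', Matrix.smul_apply, smul_eq_mul]
  intro x hx a b
  have hC : ContDiffOn ℝ (⊤ : ℕ∞) (fun x => ((M x).det)⁻¹ * (M x).adjugate a b) s := by
    refine ContDiffOn.mul (ContDiffOn.inv (contDiffOn_det ?_) hdet) (contDiffOn_adjugate ?_ a b)
    · intro i j; exact hA i j
    · intro i j; exact hA i j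
  have hCd : DifferentiableAt ℝ (fun x => ((M x).det)⁻¹ * (M x).adjugate a b) x :=
    (hC.differentiableOn (by simp)).differentiableAt (hs.mem_nhds hx)
  refine hCd.congr_of_eventuallyEq ?_
  filter_upwards [hs.mem_nhds hx] with y hy
  exact hBval y hy a b

lemma diffAt_pd {k : ℕ} {s : Set (Fin k → ℝ)} (hs : IsOpen s) {G : (Fin k → ℝ) → ℝ}
    (hG : ContDiffOn ℝ (⊤ : ℕ∞) G s) (j : Fin k) {x : Fin k → ℝ} (hx : x ∈ s) :
    DifferentiableAt ℝ (pd G j) x := by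
  have h1 : ContDiffOn ℝ (⊤ : ℕ∞) (fderiv ℝ G) s := by
    apply hG.fderiv_of_isOpen hs
    exact_mod_cast le_top
  have h2 : ContDiffOn ℝ (⊤ : ℕ∞) (fun x => fderiv ℝ G x (Pi.single j 1)) s :=
    h1.clm_apply contDiffOn_const
  exact (h2.differentiableOn (by simp)).differentiableAt (hs.mem_nhds hx)

lemma diffAt_of_contDiffOn {k : ℕ} {s : Set (Fin k → ℝ)} (hs : IsOpen s) {G : (Fin k → ℝ) → ℝ}
    (hG : ContDiffOn ℝ (⊤ : ℕ∞) G s) {x : Fin k → ℝ} (hx : x ∈ s) :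
    DifferentiableAt ℝ G x :=
  (hG.differentiableOn (by simp)).differentiableAt (hs.mem_nhds hx)

end WPaux
namespace WPaux

/-- Bundle of all standing hypotheses. -/
structure Setup (p q : ℕ) where
  U : Set (Fin p → ℝ)
  V : Set (Fin q → ℝ)
  hU : IsOpen U
  hV : IsOpen V
  gbar : (Fin p → ℝ) → Fin p → Fin p → ℝ
  gbinv : (Fin p → ℝ) → Fin p → Fin p → ℝ
  gtil : (Fin q → ℝ) → Fin q → Fin q → ℝ
  gtinv : (Fin q → ℝ) → Fin q → Fin q → ℝ
  f : (Fin p → ℝ) → ℝ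
  hgb : ∀ a b, ContDiffOn ℝ (⊤ : ℕ∞) (fun x => gbar x a b) U
  hgbs : ∀ x ∈ U, ∀ a b, gbar x a b = gbar x b a
  hgbi : ∀ x ∈ U, ∀ a b, (∑ c, gbar x a c * gbinv x c b) = if a = b then (1 : ℝ) else 0
  hgt : ∀ a b, ContDiffOn ℝ (⊤ : ℕ∞) (fun y => gtil y a b) V
  hgts : ∀ y ∈ V, ∀ a b, gtil y a b = gtil y b a
  hgti : ∀ y ∈ V, ∀ a b, (∑ c, gtil y a c * gtinv y c b) = if a = b then (1 : ℝ) else 0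
  hf : ContDiffOn ℝ (⊤ : ℕ∞) f U
  hfpos : ∀ x ∈ U, 0 < f x

namespace Setup

variable {p q : ℕ} (S : Setup p q)

def g : (Fin (p + q) → ℝ) → Fin (p + q) → Fin (p + q) → ℝ := wMet S.gbar S.gtil S.f

def ginv : (Fin (p + q) → ℝ) → Fin (p + q) → Fin (p + q) → ℝ := wMetInv S.gbinv S.gtinv S.f

def M : Set (Fin (p + q) → ℝ) := Mset S.U S.V

lemma hM : IsOpen S.M := isOpen_Mset S.hU S.hV

lemma mem1 {z : Fin (p + q) → ℝ} (hz : z ∈ S.M) : bpt z ∈ S.U := hz.1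
lemma mem2 {z : Fin (p + q) → ℝ} (hz : z ∈ S.M) : fpt z ∈ S.V := hz.2

/-! ### Metric entries -/

lemma g_bb (z : Fin (p + q) → ℝ) (a b : Fin p) :
    S.g z (Fin.castAdd q a) (Fin.castAdd q b) = S.gbar (bpt z) a b := by
  simp [g, wMet, wPair]

lemma g_ff (z : Fin (p + q) → ℝ) (α β : Fin q) :
    S.g z (Fin.natAdd p α) (Fin.natAdd p β) = S.f (bpt z) * S.gtil (fpt z) α β := by
  simp [g, wMet, wPair]

lemma g_bf (z : Fin (p + q) → ℝ) (a : Fin p) (β : Fin q) :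
    S.g z (Fin.castAdd q a) (Fin.natAdd p β) = 0 := by
  simp [g, wMet, wPair]

lemma g_fb (z : Fin (p + q) → ℝ) (α : Fin q) (b : Fin p) :
    S.g z (Fin.natAdd p α) (Fin.castAdd q b) = 0 := by
  simp [g, wMet, wPair]

lemma ginv_bb (z : Fin (p + q) → ℝ) (a b : Fin p) :
    S.ginv z (Fin.castAdd q a) (Fin.castAdd q b) = S.gbinv (bpt z) a b := by
  simp [ginv, wMetInv, wPair]

lemma ginv_ff (z : Fin (p + q) → ℝ) (α β : Fin q) :
    S.ginv z (Fin.natAdd p α) (Fin.natAdd p β) = (S.f (bpt z))⁻¹ * S.gtinv (fpt z) α β := by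
  simp [ginv, wMetInv, wPair]

lemma ginv_bf (z : Fin (p + q) → ℝ) (a : Fin p) (β : Fin q) :
    S.ginv z (Fin.castAdd q a) (Fin.natAdd p β) = 0 := by
  simp [ginv, wMetInv, wPair]

lemma ginv_fb (z : Fin (p + q) → ℝ) (α : Fin q) (b : Fin p) :
    S.ginv z (Fin.natAdd p α) (Fin.castAdd q b) = 0 := by
  simp [ginv, wMetInv, wPair]

/-! ### Differentiability stock -/

lemma diff_gb {x : Fin p → ℝ} (hx : x ∈ S.U) (a b : Fin p) :
    DifferentiableAt ℝ (fun x => S.gbar x a b) x :=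
  diffAt_of_contDiffOn S.hU (S.hgb a b) hx

lemma diff_f {x : Fin p → ℝ} (hx : x ∈ S.U) : DifferentiableAt ℝ S.f x :=
  diffAt_of_contDiffOn S.hU S.hf hx

lemma diff_pdf {x : Fin p → ℝ} (hx : x ∈ S.U) (a : Fin p) :
    DifferentiableAt ℝ (pd S.f a) x :=
  diffAt_pd S.hU S.hf a hx

lemma diff_pdgb {x : Fin p → ℝ} (hx : x ∈ S.U) (a b c : Fin p) :
    DifferentiableAt ℝ (pd (fun x => S.gbar x a b) c) x :=
  diffAt_pd S.hU (S.hgb a b) c hx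

lemma diff_gbinv {x : Fin p → ℝ} (hx : x ∈ S.U) (a b : Fin p) :
    DifferentiableAt ℝ (fun x => S.gbinv x a b) x :=
  inv_entries_diffAt S.hU S.hgb S.hgbi x hx a b

lemma diff_gt {y : Fin q → ℝ} (hy : y ∈ S.V) (α β : Fin q) :
    DifferentiableAt ℝ (fun y => S.gtil y α β) y :=
  diffAt_of_contDiffOn S.hV (S.hgt α β) hy

lemma diff_pdgt {y : Fin q → ℝ} (hy : y ∈ S.V) (α β γ : Fin q) :
    DifferentiableAt ℝ (pd (fun y => S.gtil y α β) γ) y :=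
  diffAt_pd S.hV (S.hgt α β) γ hy

lemma diff_gtinv {y : Fin q → ℝ} (hy : y ∈ S.V) (α β : Fin q) :
    DifferentiableAt ℝ (fun y => S.gtinv y α β) y :=
  inv_entries_diffAt S.hV S.hgt S.hgti y hy α β

/-- `λ^c = ḡ^{cb} f_b`. -/
def lam (c : Fin p) (x : Fin p → ℝ) : ℝ := ∑ b, S.gbinv x c b * pd S.f b x

lemma diff_lam {x : Fin p → ℝ} (hx : x ∈ S.U) (c : Fin p) :
    DifferentiableAt ℝ (S.lam c) x := by
  apply DifferentiableAt.fun_sum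
  intro b _
  exact (S.diff_gbinv hx c b).mul (S.diff_pdf hx b)

/-- `f_a / (2 f)`. -/
def hfq (a : Fin p) (x : Fin p → ℝ) : ℝ := pd S.f a x / (2 * S.f x)

lemma diff_hfq {x : Fin p → ℝ} (hx : x ∈ S.U) (a : Fin p) :
    DifferentiableAt ℝ (S.hfq a) x := by
  have h1 : S.hfq a = fun x => pd S.f a x * (2 * S.f x)⁻¹ := rfl
  rw [h1]
  have hne : 2 * S.f x ≠ 0 := by have := S.hfpos x hx; positivity
  exact DifferentiableAt.mul (S.diff_pdf hx a)
    (DifferentiableAt.inv (DifferentiableAt.mul (differentiableAt_const (2 : ℝ)) (S.diff_f hx)) hne)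

lemma diff_Gamt {y : Fin q → ℝ} (hy : y ∈ S.V) (ε α β : Fin q) :
    DifferentiableAt ℝ (Christoffel S.gtil S.gtinv ε α β) y := by
  have h1 : Christoffel S.gtil S.gtinv ε α β = fun x => (1 / 2) * ∑ r, S.gtinv x ε r *
      (pd (fun y => S.gtil y r β) α x + pd (fun y => S.gtil y α r) β x
        - pd (fun y => S.gtil y α β) r x) := rfl
  rw [h1]
  apply DifferentiableAt.const_mul
  apply DifferentiableAt.fun_sum
  intro r _
  exact (S.diff_gtinv hy ε r).mul (((S.diff_pdgt hy r β α).add (S.diff_pdgt hy α r β)).sub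
    (S.diff_pdgt hy α β r))

lemma diff_Gamb {x : Fin p → ℝ} (hx : x ∈ S.U) (c a b : Fin p) :
    DifferentiableAt ℝ (Christoffel S.gbar S.gbinv c a b) x := by
  have h1 : Christoffel S.gbar S.gbinv c a b = fun x => (1 / 2) * ∑ r, S.gbinv x c r *
      (pd (fun y => S.gbar y r b) a x + pd (fun y => S.gbar y a r) b x
        - pd (fun y => S.gbar y a b) r x) := rfl
  rw [h1]
  apply DifferentiableAt.const_mul
  apply DifferentiableAt.fun_sum
  intro r _
  exact (S.diff_gbinv hx c r).mul (((S.diff_pdgb hx r b a).add (S.diff_pdgb hx a r b)).sub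
    (S.diff_pdgb hx a b r))

/-! ### pd of metric entries -/

variable {z : Fin (p + q) → ℝ}

lemma pdg_bb_b (hz : z ∈ S.M) (a b c : Fin p) :
    pd (fun y => S.g y (Fin.castAdd q a) (Fin.castAdd q b)) (Fin.castAdd q c) z
      = pd (fun x => S.gbar x a b) c (bpt z) := by
  have h1 : (fun y => S.g y (Fin.castAdd q a) (Fin.castAdd q b))
      = fun y => (fun x => S.gbar x a b) (bpt y) := by
    funext y; exact S.g_bb y a b
  rw [h1]
  exact pd_comp_bpt_base (S.diff_gb (S.mem1 hz) a b) c

lemma pdg_bb_f (hz : z ∈ S.M) (a b : Fin p) (γ : Fin q) :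
    pd (fun y => S.g y (Fin.castAdd q a) (Fin.castAdd q b)) (Fin.natAdd p γ) z = 0 := by
  have h1 : (fun y => S.g y (Fin.castAdd q a) (Fin.castAdd q b))
      = fun y => (fun x => S.gbar x a b) (bpt y) := by
    funext y; exact S.g_bb y a b
  rw [h1]
  exact pd_comp_bpt_fiber (S.diff_gb (S.mem1 hz) a b) γ

lemma pdg_ff_b (hz : z ∈ S.M) (α β : Fin q) (c : Fin p) :
    pd (fun y => S.g y (Fin.natAdd p α) (Fin.natAdd p β)) (Fin.castAdd q c) z
      = pd S.f c (bpt z) * S.gtil (fpt z) α β := by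
  have h1 : (fun y => S.g y (Fin.natAdd p α) (Fin.natAdd p β))
      = fun y => S.f (bpt y) * S.gtil (fpt y) α β := by
    funext y; exact S.g_ff y α β
  rw [h1]
  exact pd_mul_bf_base (S.diff_f (S.mem1 hz)) (S.diff_gt (S.mem2 hz) α β) c

lemma pdg_ff_f (hz : z ∈ S.M) (α β γ : Fin q) :
    pd (fun y => S.g y (Fin.natAdd p α) (Fin.natAdd p β)) (Fin.natAdd p γ) z
      = S.f (bpt z) * pd (fun y => S.gtil y α β) γ (fpt z) := by
  have h1 : (fun y => S.g y (Fin.natAdd p α) (Fin.natAdd p β))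
      = fun y => S.f (bpt y) * S.gtil (fpt y) α β := by
    funext y; exact S.g_ff y α β
  rw [h1]
  exact pd_mul_bf_fiber (S.diff_f (S.mem1 hz)) (S.diff_gt (S.mem2 hz) α β) γ

lemma pdg_bf (a : Fin p) (β : Fin q) (j : Fin (p + q)) :
    pd (fun y => S.g y (Fin.castAdd q a) (Fin.natAdd p β)) j z = 0 := by
  have h1 : (fun y => S.g y (Fin.castAdd q a) (Fin.natAdd p β)) = fun _ => (0 : ℝ) := by
    funext y; exact S.g_bf y a β
  rw [h1, pd_const]

lemma pdg_fb (α : Fin q) (b : Fin p) (j : Fin (p + q)) :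
    pd (fun y => S.g y (Fin.natAdd p α) (Fin.castAdd q b)) j z = 0 := by
  have h1 : (fun y => S.g y (Fin.natAdd p α) (Fin.castAdd q b)) = fun _ => (0 : ℝ) := by
    funext y; exact S.g_fb y α b
  rw [h1, pd_const]

end Setup

end WPaux
namespace WPaux
namespace Setup

variable {p q : ℕ} (S : Setup p q) {z : Fin (p + q) → ℝ}

lemma Gam_expand (i j l : Fin (p + q)) :
    Christoffel S.g S.ginv i j l z = (1 / 2) * ∑ r, S.ginv z i r *
      (pd (fun y => S.g y r l) j z + pd (fun y => S.g y j r) l z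
        - pd (fun y => S.g y j l) r z) := rfl

/-- `Γ^c_{ab} = Γ̄^c_{ab}`. -/
lemma Gam_bbb (hz : z ∈ S.M) (c a b : Fin p) :
    Christoffel S.g S.ginv (Fin.castAdd q c) (Fin.castAdd q a) (Fin.castAdd q b) z
      = Christoffel S.gbar S.gbinv c a b (bpt z) := by
  have h2 : Christoffel S.gbar S.gbinv c a b (bpt z) = (1 / 2) * ∑ r, S.gbinv (bpt z) c r *
      (pd (fun y => S.gbar y r b) a (bpt z) + pd (fun y => S.gbar y a r) b (bpt z)
        - pd (fun y => S.gbar y a b) r (bpt z)) := rfl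
  rw [Gam_expand, h2, Fin.sum_univ_add]
  simp only [S.ginv_bb, S.ginv_bf, S.pdg_bb_b hz, zero_mul, Finset.sum_const_zero, add_zero]

/-- `Γ^γ_{ab} = 0`. -/
lemma Gam_fbb (hz : z ∈ S.M) (ε : Fin q) (a b : Fin p) :
    Christoffel S.g S.ginv (Fin.natAdd p ε) (Fin.castAdd q a) (Fin.castAdd q b) z = 0 := by
  rw [Gam_expand, Fin.sum_univ_add]
  simp only [S.ginv_fb, S.ginv_ff, S.pdg_fb, S.pdg_bf, S.pdg_bb_f hz, zero_mul,
    Finset.sum_const_zero, add_zero, zero_add, sub_zero, mul_zero]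

/-- `Γ^c_{a β} = 0`. -/
lemma Gam_bbf (hz : z ∈ S.M) (c a : Fin p) (β : Fin q) :
    Christoffel S.g S.ginv (Fin.castAdd q c) (Fin.castAdd q a) (Fin.natAdd p β) z = 0 := by
  rw [Gam_expand, Fin.sum_univ_add]
  simp only [S.ginv_bb, S.ginv_bf, S.pdg_bf, S.pdg_bb_f hz, zero_mul, Finset.sum_const_zero,
    add_zero, zero_add, sub_zero, mul_zero]

/-- `Γ^c_{β a} = 0`. -/
lemma Gam_bfb (hz : z ∈ S.M) (c : Fin p) (β : Fin q) (a : Fin p) :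
    Christoffel S.g S.ginv (Fin.castAdd q c) (Fin.natAdd p β) (Fin.castAdd q a) z = 0 := by
  rw [Gam_expand, Fin.sum_univ_add]
  simp only [S.ginv_bb, S.ginv_bf, S.pdg_fb, S.pdg_bb_f hz, zero_mul, Finset.sum_const_zero,
    add_zero, zero_add, sub_zero, mul_zero]

/-- `Γ^ε_{a δ} = (f_a/(2f)) δ^ε_δ`. -/
lemma Gam_fbf (hz : z ∈ S.M) (ε : Fin q) (a : Fin p) (δ : Fin q) :
    Christoffel S.g S.ginv (Fin.natAdd p ε) (Fin.castAdd q a) (Fin.natAdd p δ) z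
      = if ε = δ then S.hfq a (bpt z) else 0 := by
  have hfne : S.f (bpt z) ≠ 0 := ne_of_gt (S.hfpos _ (S.mem1 hz))
  have hflip := inv_flip (S.hgti (fpt z) (S.mem2 hz))
  rw [Gam_expand, Fin.sum_univ_add]
  simp only [S.ginv_fb, S.ginv_ff, S.pdg_bf, S.pdg_ff_b hz, zero_mul, Finset.sum_const_zero,
    zero_add, add_zero, sub_zero]
  have key : ∑ ρ, (S.f (bpt z))⁻¹ * S.gtinv (fpt z) ε ρ
        * (pd S.f a (bpt z) * S.gtil (fpt z) ρ δ)
      = (S.f (bpt z))⁻¹ * pd S.f a (bpt z) * (if ε = δ then 1 else 0) := by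
    rw [← hflip ε δ, Finset.mul_sum]
    exact Finset.sum_congr rfl fun ρ _ => by ring
  rw [key, hfq]
  split_ifs
  · field_simp
  · ring

/-- `Γ^ε_{δ a} = (f_a/(2f)) δ^ε_δ`. -/
lemma Gam_ffb (hz : z ∈ S.M) (ε δ : Fin q) (a : Fin p) :
    Christoffel S.g S.ginv (Fin.natAdd p ε) (Fin.natAdd p δ) (Fin.castAdd q a) z
      = if ε = δ then S.hfq a (bpt z) else 0 := by
  have hfne : S.f (bpt z) ≠ 0 := ne_of_gt (S.hfpos _ (S.mem1 hz))
  have hflip := inv_flip (S.hgti (fpt z) (S.mem2 hz))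
  rw [Gam_expand, Fin.sum_univ_add]
  simp only [S.ginv_fb, S.ginv_ff, S.pdg_fb, S.pdg_ff_b hz, zero_mul, Finset.sum_const_zero,
    zero_add, add_zero, sub_zero]
  have key : ∑ ρ, (S.f (bpt z))⁻¹ * S.gtinv (fpt z) ε ρ
        * (pd S.f a (bpt z) * S.gtil (fpt z) δ ρ)
      = (S.f (bpt z))⁻¹ * pd S.f a (bpt z) * (if ε = δ then 1 else 0) := by
    rw [← hflip ε δ, Finset.mul_sum]
    refine Finset.sum_congr rfl fun ρ _ => ?_
    rw [S.hgts (fpt z) (S.mem2 hz) δ ρ]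
    ring
  rw [key, hfq]
  split_ifs
  · field_simp
  · ring

/-- `Γ^c_{αβ} = -(1/2) λ^c g̃_{αβ}`. -/
lemma Gam_bff (hz : z ∈ S.M) (c : Fin p) (α β : Fin q) :
    Christoffel S.g S.ginv (Fin.castAdd q c) (Fin.natAdd p α) (Fin.natAdd p β) z
      = -(1 / 2) * S.lam c (bpt z) * S.gtil (fpt z) α β := by
  rw [Gam_expand, Fin.sum_univ_add]
  simp only [S.ginv_bb, S.ginv_bf, S.pdg_bf, S.pdg_fb, S.pdg_ff_b hz, zero_mul,
    Finset.sum_const_zero, add_zero, zero_add, zero_sub]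
  rw [lam, Finset.mul_sum, mul_assoc, Finset.sum_mul, Finset.mul_sum]
  exact Finset.sum_congr rfl fun b _ => by ring

/-- `Γ^ε_{αβ} = Γ̃^ε_{αβ}`. -/
lemma Gam_fff (hz : z ∈ S.M) (ε α β : Fin q) :
    Christoffel S.g S.ginv (Fin.natAdd p ε) (Fin.natAdd p α) (Fin.natAdd p β) z
      = Christoffel S.gtil S.gtinv ε α β (fpt z) := by
  have hfne : S.f (bpt z) ≠ 0 := ne_of_gt (S.hfpos _ (S.mem1 hz))
  have h2 : Christoffel S.gtil S.gtinv ε α β (fpt z) = (1 / 2) * ∑ r, S.gtinv (fpt z) ε r *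
      (pd (fun y => S.gtil y r β) α (fpt z) + pd (fun y => S.gtil y α r) β (fpt z)
        - pd (fun y => S.gtil y α β) r (fpt z)) := rfl
  rw [Gam_expand, h2, Fin.sum_univ_add]
  simp only [S.ginv_fb, S.ginv_ff, S.pdg_ff_f hz, zero_mul, Finset.sum_const_zero, zero_add]
  congr 1
  refine Finset.sum_congr rfl fun ρ _ => ?_
  field_simp

end Setup
end WPaux
namespace WPaux

lemma pd_const_mul {k : ℕ} {F : (Fin k → ℝ) → ℝ} {x : Fin k → ℝ}
    (hF : DifferentiableAt ℝ F x) (c : ℝ) (j : Fin k) :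
    pd (fun y => c * F y) j x = c * pd F j x := by
  rw [pd_mul (differentiableAt_const c) hF, pd_const]; ring

lemma sum_const_mul {k : ℕ} (c : ℝ) (F G : Fin k → ℝ) :
    ∑ x, (c * F x) * G x = c * ∑ x, F x * G x := by
  rw [Finset.mul_sum]; exact Finset.sum_congr rfl fun x _ => by ring

namespace Setup

variable {p q : ℕ} (S : Setup p q) {z : Fin (p + q) → ℝ}

lemma pd_gtil_symm {y : Fin q → ℝ} (hy : y ∈ S.V) (a b : Fin q) (c : Fin q) :
    pd (fun x => S.gtil x a b) c y = pd (fun x => S.gtil x b a) c y :=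
  pd_congr S.hV hy (fun x hx => S.hgts x hx a b) c

lemma Gamt_symm {y : Fin q → ℝ} (hy : y ∈ S.V) (ε α β : Fin q) :
    Christoffel S.gtil S.gtinv ε α β y = Christoffel S.gtil S.gtinv ε β α y := by
  show (1 / 2) * ∑ r, S.gtinv y ε r *
      (pd (fun x => S.gtil x r β) α y + pd (fun x => S.gtil x α r) β y
        - pd (fun x => S.gtil x α β) r y)
    = (1 / 2) * ∑ r, S.gtinv y ε r *
      (pd (fun x => S.gtil x r α) β y + pd (fun x => S.gtil x β r) α y
        - pd (fun x => S.gtil x β α) r y)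
  congr 1
  refine Finset.sum_congr rfl fun ρ _ => ?_
  rw [S.pd_gtil_symm hy ρ β α, S.pd_gtil_symm hy α ρ β, S.pd_gtil_symm hy α β ρ]
  ring

lemma lower_Gamt {y : Fin q → ℝ} (hy : y ∈ S.V) (β γ α : Fin q) :
    (∑ ε, S.gtil y β ε * Christoffel S.gtil S.gtinv ε γ α y)
      = (1 / 2) * (pd (fun x => S.gtil x β α) γ y + pd (fun x => S.gtil x γ β) α y
          - pd (fun x => S.gtil x γ α) β y) := by
  have hti := S.hgti y hy
  have h1 : (∑ ε, S.gtil y β ε * Christoffel S.gtil S.gtinv ε γ α y)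
      = ∑ ε, ∑ ρ, S.gtil y β ε * S.gtinv y ε ρ *
          ((1 / 2) * (pd (fun x => S.gtil x ρ α) γ y + pd (fun x => S.gtil x γ ρ) α y
            - pd (fun x => S.gtil x γ α) ρ y)) := by
    refine Finset.sum_congr rfl fun ε _ => ?_
    show S.gtil y β ε * ((1 / 2) * ∑ ρ, S.gtinv y ε ρ *
        (pd (fun x => S.gtil x ρ α) γ y + pd (fun x => S.gtil x γ ρ) α y
          - pd (fun x => S.gtil x γ α) ρ y)) = _
    rw [Finset.mul_sum, Finset.mul_sum]
    refine Finset.sum_congr rfl fun ρ _ => by ring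
  rw [h1, Finset.sum_comm]
  have h2 : ∀ ρ : Fin q, (∑ ε, S.gtil y β ε * S.gtinv y ε ρ *
        ((1 / 2) * (pd (fun x => S.gtil x ρ α) γ y + pd (fun x => S.gtil x γ ρ) α y
          - pd (fun x => S.gtil x γ α) ρ y)))
      = (if β = ρ then (1 : ℝ) else 0) *
          ((1 / 2) * (pd (fun x => S.gtil x ρ α) γ y + pd (fun x => S.gtil x γ ρ) α y
            - pd (fun x => S.gtil x γ α) ρ y)) := by
    intro ρ
    rw [← Finset.sum_mul, hti β ρ]
  rw [Finset.sum_congr rfl fun ρ _ => h2 ρ, sum_delta_mul]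

/-! ### pd of Christoffel symbols of the warped metric -/

/-- `∂_β Γ^c_{γα}`. -/
lemma pdGam_bff_f (hz : z ∈ S.M) (c : Fin p) (γ α β : Fin q) :
    pd (Christoffel S.g S.ginv (Fin.castAdd q c) (Fin.natAdd p γ) (Fin.natAdd p α))
        (Fin.natAdd p β) z
      = -(1 / 2) * S.lam c (bpt z) * pd (fun x => S.gtil x γ α) β (fpt z) := by
  have h1 : pd (Christoffel S.g S.ginv (Fin.castAdd q c) (Fin.natAdd p γ) (Fin.natAdd p α))
        (Fin.natAdd p β) z
      = pd (fun y => (fun x => -(1 / 2) * S.lam c x) (bpt y) * (fun v => S.gtil v γ α) (fpt y))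
          (Fin.natAdd p β) z := by
    refine pd_congr S.hM hz (fun y hy => ?_) _
    rw [S.Gam_bff hy c γ α]
  rw [h1, pd_mul_bf_fiber (F := fun x => -(1 / 2) * S.lam c x) ((differentiableAt_const (-(1 / 2) : ℝ)).mul (S.diff_lam (S.mem1 hz) c))
    (S.diff_gt (S.mem2 hz) γ α) β]

/-- `∂_b Γ^c_{γα}`. -/
lemma pdGam_bff_b (hz : z ∈ S.M) (c : Fin p) (γ α : Fin q) (b : Fin p) :
    pd (Christoffel S.g S.ginv (Fin.castAdd q c) (Fin.natAdd p γ) (Fin.natAdd p α))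
        (Fin.castAdd q b) z
      = -(1 / 2) * pd (S.lam c) b (bpt z) * S.gtil (fpt z) γ α := by
  have h1 : pd (Christoffel S.g S.ginv (Fin.castAdd q c) (Fin.natAdd p γ) (Fin.natAdd p α))
        (Fin.castAdd q b) z
      = pd (fun y => (fun x => -(1 / 2) * S.lam c x) (bpt y) * (fun v => S.gtil v γ α) (fpt y))
          (Fin.castAdd q b) z := by
    refine pd_congr S.hM hz (fun y hy => ?_) _
    rw [S.Gam_bff hy c γ α]
  rw [h1, pd_mul_bf_base (F := fun x => -(1 / 2) * S.lam c x) ((differentiableAt_const (-(1 / 2) : ℝ)).mul (S.diff_lam (S.mem1 hz) c))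
    (S.diff_gt (S.mem2 hz) γ α) b]
  rw [pd_const_mul (S.diff_lam (S.mem1 hz) c)]

/-- `∂_β Γ^ε_{γα} = ∂̃_β Γ̃^ε_{γα}`. -/
lemma pdGam_fff_f (hz : z ∈ S.M) (ε γ α β : Fin q) :
    pd (Christoffel S.g S.ginv (Fin.natAdd p ε) (Fin.natAdd p γ) (Fin.natAdd p α))
        (Fin.natAdd p β) z
      = pd (Christoffel S.gtil S.gtinv ε γ α) β (fpt z) := by
  have h1 : pd (Christoffel S.g S.ginv (Fin.natAdd p ε) (Fin.natAdd p γ) (Fin.natAdd p α))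
        (Fin.natAdd p β) z
      = pd (fun y => Christoffel S.gtil S.gtinv ε γ α (fpt y)) (Fin.natAdd p β) z :=
    pd_congr S.hM hz (fun y hy => S.Gam_fff hy ε γ α) _
  rw [h1, pd_comp_fpt_fiber (S.diff_Gamt (S.mem2 hz) ε γ α) β]

/-- `∂ Γ^c_{bα} = 0` (any direction). -/
lemma pdGam_bbf_any (hz : z ∈ S.M) (c b : Fin p) (α : Fin q) (j : Fin (p + q)) :
    pd (Christoffel S.g S.ginv (Fin.castAdd q c) (Fin.castAdd q b) (Fin.natAdd p α)) j z = 0 :=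
  pd_zero_of_eqOn S.hM hz (fun y hy => S.Gam_bbf hy c b α) j

/-- `∂ Γ^c_{αb} = 0` (any direction). -/
lemma pdGam_bfb_any (hz : z ∈ S.M) (c : Fin p) (α : Fin q) (b : Fin p) (j : Fin (p + q)) :
    pd (Christoffel S.g S.ginv (Fin.castAdd q c) (Fin.natAdd p α) (Fin.castAdd q b)) j z = 0 :=
  pd_zero_of_eqOn S.hM hz (fun y hy => S.Gam_bfb hy c α b) j

/-- `∂_ρ Γ^σ_{γ a} = 0` (fiber derivative of a base function). -/
lemma pdGam_ffb_f (hz : z ∈ S.M) (σ γ : Fin q) (a : Fin p) (ρ : Fin q) :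
    pd (Christoffel S.g S.ginv (Fin.natAdd p σ) (Fin.natAdd p γ) (Fin.castAdd q a))
        (Fin.natAdd p ρ) z = 0 := by
  rcases eq_or_ne σ γ with rfl | hne
  · have h1 : pd (Christoffel S.g S.ginv (Fin.natAdd p σ) (Fin.natAdd p σ) (Fin.castAdd q a))
          (Fin.natAdd p ρ) z
        = pd (fun y => S.hfq a (bpt y)) (Fin.natAdd p ρ) z := by
      refine pd_congr S.hM hz (fun y hy => ?_) _
      rw [S.Gam_ffb hy σ σ a, if_pos rfl]
    rw [h1, pd_comp_bpt_fiber (S.diff_hfq (S.mem1 hz) a) ρ]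
  · refine pd_zero_of_eqOn S.hM hz (fun y hy => ?_) _
    rw [S.Gam_ffb hy σ γ a, if_neg hne]

/-- `∂_γ Γ̄^d_{ca} = 0` (fiber derivative of a base function). -/
lemma pdGam_bbb_f (hz : z ∈ S.M) (d c a : Fin p) (γ : Fin q) :
    pd (Christoffel S.g S.ginv (Fin.castAdd q d) (Fin.castAdd q c) (Fin.castAdd q a))
        (Fin.natAdd p γ) z = 0 := by
  have h1 : pd (Christoffel S.g S.ginv (Fin.castAdd q d) (Fin.castAdd q c) (Fin.castAdd q a))
        (Fin.natAdd p γ) z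
      = pd (fun y => Christoffel S.gbar S.gbinv d c a (bpt y)) (Fin.natAdd p γ) z :=
    pd_congr S.hM hz (fun y hy => S.Gam_bbb hy d c a) _
  rw [h1, pd_comp_bpt_fiber (S.diff_Gamb (S.mem1 hz) d c a) γ]

end Setup
end WPaux
namespace WPaux
namespace Setup

variable {p q : ℕ} (S : Setup p q) {z : Fin (p + q) → ℝ}

lemma Riem_expand (i j s l : Fin (p + q)) :
    Riem S.g S.ginv z i j s l = ∑ r, S.g z i r *
      (pd (Christoffel S.g S.ginv r l j) s z - pd (Christoffel S.g S.ginv r s j) l z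
        + (∑ t, Christoffel S.g S.ginv r s t z * Christoffel S.g S.ginv t l j z)
        - ∑ t, Christoffel S.g S.ginv r l t z * Christoffel S.g S.ginv t s j z) := rfl

lemma Riemt_expand (y : Fin q → ℝ) (i j s l : Fin q) :
    Riem S.gtil S.gtinv y i j s l = ∑ r, S.gtil y i r *
      (pd (Christoffel S.gtil S.gtinv r l j) s y - pd (Christoffel S.gtil S.gtinv r s j) l y
        + (∑ t, Christoffel S.gtil S.gtinv r s t y * Christoffel S.gtil S.gtinv t l j y)
        - ∑ t, Christoffel S.gtil S.gtinv r l t y * Christoffel S.gtil S.gtinv t s j y) := rfl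

/-- `R_{aαβγ} = 0`. -/
lemma Riem_bfff (hz : z ∈ S.M) (a : Fin p) (α β γ : Fin q) :
    Riem S.g S.ginv z (Fin.castAdd q a) (Fin.natAdd p α) (Fin.natAdd p β) (Fin.natAdd p γ)
      = 0 := by
  rw [Riem_expand, Fin.sum_univ_add]
  simp only [S.g_bf, zero_mul, Finset.sum_const_zero, add_zero]
  apply Finset.sum_eq_zero
  intro b _
  simp only [Fin.sum_univ_add]
  simp only [S.pdGam_bff_f hz, S.Gam_bfb hz, S.Gam_bff hz, S.Gam_fff hz, zero_mul, mul_zero,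
    Finset.sum_const_zero, zero_add, add_zero]
  rw [sum_const_mul, sum_const_mul, S.lower_Gamt (S.mem2 hz) β γ α,
    S.lower_Gamt (S.mem2 hz) γ β α, S.pd_gtil_symm (S.mem2 hz) γ β α]
  ring

/-- `R_{abβγ} = 0`. -/
lemma Riem_bbff (hz : z ∈ S.M) (a b : Fin p) (β γ : Fin q) :
    Riem S.g S.ginv z (Fin.castAdd q a) (Fin.castAdd q b) (Fin.natAdd p β) (Fin.natAdd p γ)
      = 0 := by
  rw [Riem_expand, Fin.sum_univ_add]
  simp only [S.g_bf, zero_mul, Finset.sum_const_zero, add_zero]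
  apply Finset.sum_eq_zero
  intro c _
  simp only [Fin.sum_univ_add]
  simp only [S.pdGam_bfb_any hz, S.Gam_bff hz, S.Gam_bfb hz, S.Gam_ffb hz, zero_mul, mul_zero,
    Finset.sum_const_zero, zero_add, add_zero, sub_zero, zero_sub, mul_ite, ite_mul]
  simp only [Finset.sum_ite_eq', Finset.mem_univ, if_true]
  rw [S.hgts (fpt z) (S.mem2 hz) β γ]
  ring

/-- `R_{bacγ} = 0`. -/
lemma Riem_bbbf (hz : z ∈ S.M) (b a c : Fin p) (γ : Fin q) :
    Riem S.g S.ginv z (Fin.castAdd q b) (Fin.castAdd q a) (Fin.castAdd q c) (Fin.natAdd p γ)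
      = 0 := by
  rw [Riem_expand, Fin.sum_univ_add]
  simp only [S.g_bf, zero_mul, Finset.sum_const_zero, add_zero]
  apply Finset.sum_eq_zero
  intro d _
  simp only [Fin.sum_univ_add]
  simp only [S.pdGam_bfb_any hz, S.pdGam_bbb_f hz, S.Gam_bbb hz, S.Gam_bfb hz, S.Gam_bbf hz,
    S.Gam_fbb hz, S.Gam_bff hz, zero_mul, mul_zero, Finset.sum_const_zero, zero_add, add_zero,
    sub_zero, sub_self]

/-- `R_{εaργ} = 0`. -/
lemma Riem_fbff (hz : z ∈ S.M) (ε : Fin q) (a : Fin p) (ρ γ : Fin q) :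
    Riem S.g S.ginv z (Fin.natAdd p ε) (Fin.castAdd q a) (Fin.natAdd p ρ) (Fin.natAdd p γ)
      = 0 := by
  rw [Riem_expand, Fin.sum_univ_add]
  simp only [S.g_fb, zero_mul, Finset.sum_const_zero, zero_add]
  apply Finset.sum_eq_zero
  intro σ _
  simp only [Fin.sum_univ_add]
  simp only [S.pdGam_ffb_f hz, S.Gam_ffb hz, S.Gam_bfb hz, S.Gam_fff hz, S.Gam_fbf hz,
    zero_mul, mul_zero, Finset.sum_const_zero, zero_add, add_zero, sub_zero, zero_sub,
    mul_ite, ite_mul]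
  simp only [Finset.sum_ite_eq', Finset.mem_univ, if_true]
  rw [S.Gamt_symm (S.mem2 hz) σ ρ γ]
  simp

end Setup
end WPaux
namespace WPaux

lemma sum_mul_rearr {k : ℕ} (c e : ℝ) (F G : Fin k → ℝ) :
    ∑ x, F x * (c * G x * e) = c * e * ∑ x, F x * G x := by
  rw [Finset.mul_sum]; exact Finset.sum_congr rfl fun x _ => by ring

namespace Setup

variable {p q : ℕ} (S : Setup p q) {z : Fin (p + q) → ℝ}

/-- The coefficient `κ_{ab}` with `R_{aαbγ} = κ_{ab} g̃_{γα}`. -/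
def kap (a b : Fin p) (x : Fin p → ℝ) : ℝ :=
  -(1 / 2) * ∑ c, S.gbar x a c * (pd (S.lam c) b x
    + (∑ d, Christoffel S.gbar S.gbinv c b d x * S.lam d x) - S.hfq b x * S.lam c x)

lemma kap_def (a b : Fin p) (x : Fin p → ℝ) : S.kap a b x =
    -(1 / 2) * ∑ c, S.gbar x a c * (pd (S.lam c) b x
      + (∑ d, Christoffel S.gbar S.gbinv c b d x * S.lam d x) - S.hfq b x * S.lam c x) := rfl

/-- `Q = (f_c λ^c)/(2f) = 2 f P`. -/
def Qq (x : Fin p → ℝ) : ℝ := ∑ c, S.hfq c x * S.lam c x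

lemma Qq_def (x : Fin p → ℝ) : S.Qq x = ∑ c, S.hfq c x * S.lam c x := rfl

/-- `μ_a = λ^b κ_{ab}`. -/
def mu (a : Fin p) (x : Fin p → ℝ) : ℝ := ∑ b, S.lam b x * S.kap a b x

lemma mu_def (a : Fin p) (x : Fin p → ℝ) : S.mu a x = ∑ b, S.lam b x * S.kap a b x := rfl

/-- `R_{aαbγ} = κ_{ab} g̃_{γα}`. -/
lemma Riem_bfbf (hz : z ∈ S.M) (a : Fin p) (α : Fin q) (b : Fin p) (γ : Fin q) :
    Riem S.g S.ginv z (Fin.castAdd q a) (Fin.natAdd p α) (Fin.castAdd q b) (Fin.natAdd p γ)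
      = S.kap a b (bpt z) * S.gtil (fpt z) γ α := by
  rw [Riem_expand, Fin.sum_univ_add]
  simp only [S.g_bf, S.g_bb, zero_mul, Finset.sum_const_zero, add_zero]
  rw [S.kap_def, mul_assoc, Finset.sum_mul, Finset.mul_sum]
  refine Finset.sum_congr rfl fun c _ => ?_
  simp only [Fin.sum_univ_add]
  simp only [S.pdGam_bff_b hz, S.pdGam_bbf_any hz, S.Gam_bbb hz, S.Gam_bff hz, S.Gam_bbf hz,
    S.Gam_bfb hz, S.Gam_fbf hz, mul_ite, mul_zero, zero_mul, Finset.sum_const_zero, zero_add,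
    add_zero, sub_zero]
  simp only [Finset.sum_ite_eq', Finset.mem_univ, if_true]
  rw [sum_mul_rearr]
  ring

/-- `R_{aαβb} = -κ_{ab} g̃_{βα}`. -/
lemma Riem_bffb (hz : z ∈ S.M) (a : Fin p) (α β : Fin q) (b : Fin p) :
    Riem S.g S.ginv z (Fin.castAdd q a) (Fin.natAdd p α) (Fin.natAdd p β) (Fin.castAdd q b)
      = -S.kap a b (bpt z) * S.gtil (fpt z) β α := by
  rw [Riem_expand, Fin.sum_univ_add]
  simp only [S.g_bf, S.g_bb, zero_mul, Finset.sum_const_zero, add_zero]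
  rw [S.kap_def, neg_mul, neg_mul, neg_mul, neg_neg, mul_assoc, Finset.sum_mul, Finset.mul_sum]
  refine Finset.sum_congr rfl fun c _ => ?_
  simp only [Fin.sum_univ_add]
  simp only [S.pdGam_bff_b hz, S.pdGam_bbf_any hz, S.Gam_bbb hz, S.Gam_bff hz, S.Gam_bbf hz,
    S.Gam_bfb hz, S.Gam_fbf hz, mul_ite, mul_zero, zero_mul, Finset.sum_const_zero, zero_add,
    add_zero, sub_zero, zero_sub]
  simp only [Finset.sum_ite_eq', Finset.mem_univ, if_true]
  rw [sum_mul_rearr]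
  ring

/-- `R_{δαβγ} = f R̃_{δαβγ} - (fQ/2)(g̃_{δβ}g̃_{γα} - g̃_{δγ}g̃_{βα})`. -/
lemma Riem_ffff (hz : z ∈ S.M) (δ α β γ : Fin q) :
    Riem S.g S.ginv z (Fin.natAdd p δ) (Fin.natAdd p α) (Fin.natAdd p β) (Fin.natAdd p γ)
      = S.f (bpt z) * Riem S.gtil S.gtinv (fpt z) δ α β γ
        - (S.f (bpt z) * S.Qq (bpt z) / 2) * (S.gtil (fpt z) δ β * S.gtil (fpt z) γ α
            - S.gtil (fpt z) δ γ * S.gtil (fpt z) β α) := by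
  rw [Riem_expand, Fin.sum_univ_add]
  simp only [S.g_fb, S.g_ff, zero_mul, Finset.sum_const_zero, zero_add]
  simp only [Fin.sum_univ_add]
  simp only [S.pdGam_fff_f hz, S.Gam_ffb hz, S.Gam_bff hz, S.Gam_fff hz, ite_mul, zero_mul]
  have hc : ∀ (ε μ : Fin q) (G : ℝ),
      (∑ c, if ε = μ then S.hfq c (bpt z) * (-(1 / 2) * S.lam c (bpt z) * G) else 0)
        = if ε = μ then -(1 / 2) * S.Qq (bpt z) * G else 0 := by
    intro ε μ G
    rcases eq_or_ne ε μ with rfl | hne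
    · simp only [eq_self_iff_true, if_true]
      rw [sum_mul_rearr, S.Qq_def]
      ring
    · simp [hne]
  simp only [hc]
  have key : ∀ ε : Fin q, S.f (bpt z) * S.gtil (fpt z) δ ε *
        (pd (Christoffel S.gtil S.gtinv ε γ α) β (fpt z)
          - pd (Christoffel S.gtil S.gtinv ε β α) γ (fpt z)
          + ((if ε = β then -(1 / 2) * S.Qq (bpt z) * S.gtil (fpt z) γ α else 0)
              + ∑ τ, Christoffel S.gtil S.gtinv ε β τ (fpt z)
                  * Christoffel S.gtil S.gtinv τ γ α (fpt z))
          - ((if ε = γ then -(1 / 2) * S.Qq (bpt z) * S.gtil (fpt z) β α else 0)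
              + ∑ τ, Christoffel S.gtil S.gtinv ε γ τ (fpt z)
                  * Christoffel S.gtil S.gtinv τ β α (fpt z)))
      = S.f (bpt z) * (S.gtil (fpt z) δ ε *
          (pd (Christoffel S.gtil S.gtinv ε γ α) β (fpt z)
            - pd (Christoffel S.gtil S.gtinv ε β α) γ (fpt z)
            + (∑ τ, Christoffel S.gtil S.gtinv ε β τ (fpt z)
                * Christoffel S.gtil S.gtinv τ γ α (fpt z))
            - ∑ τ, Christoffel S.gtil S.gtinv ε γ τ (fpt z)
                * Christoffel S.gtil S.gtinv τ β α (fpt z)))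
        + (if ε = β then S.f (bpt z) * S.gtil (fpt z) δ ε
            * (-(1 / 2) * S.Qq (bpt z) * S.gtil (fpt z) γ α) else 0)
        - (if ε = γ then S.f (bpt z) * S.gtil (fpt z) δ ε
            * (-(1 / 2) * S.Qq (bpt z) * S.gtil (fpt z) β α) else 0) := by
    intro ε
    split_ifs <;> ring
  rw [Finset.sum_congr rfl fun ε _ => key ε]
  rw [Finset.sum_sub_distrib, Finset.sum_add_distrib, ← Finset.mul_sum,
    ← S.Riemt_expand (fpt z) δ α β γ]
  simp only [Finset.sum_ite_eq', Finset.mem_univ, if_true]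
  ring

/-- Mixed Ricci `S_{aγ} = 0`. -/
lemma Ric_mixed (hz : z ∈ S.M) (a : Fin p) (γ : Fin q) :
    Ric S.g S.ginv z (Fin.castAdd q a) (Fin.natAdd p γ) = 0 := by
  show (∑ i, ∑ s, S.ginv z i s * Riem S.g S.ginv z i (Fin.castAdd q a) s (Fin.natAdd p γ)) = 0
  rw [Fin.sum_univ_add]
  simp only [Fin.sum_univ_add]
  simp only [S.ginv_bf, S.ginv_fb, zero_mul, Finset.sum_const_zero, add_zero, zero_add]
  simp only [S.Riem_bbbf hz, S.Riem_fbff hz, mul_zero, Finset.sum_const_zero, add_zero]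

end Setup
end WPaux
namespace WPaux

lemma sum_rearr2 {k : ℕ} (c e d : ℝ) (F G : Fin k → ℝ) :
    ∑ x, (c * F x * e) * (G x * d) = c * e * d * ∑ x, F x * G x := by
  rw [Finset.mul_sum]; exact Finset.sum_congr rfl fun x _ => by ring

lemma sum_rearr3 {k : ℕ} (c e d : ℝ) (F G : Fin k → ℝ) :
    ∑ x, (c * F x * e) * (-G x * d) = -(c * e * d) * ∑ x, F x * G x := by
  rw [Finset.mul_sum]; exact Finset.sum_congr rfl fun x _ => by ring

namespace Setup

variable {p q : ℕ}

lemma fiber_const_curv (S : Setup p q)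
    (piF phiF psiF thetaF : (Fin (p + q) → ℝ) → Fin (p + q) → ℝ)
    (hsgk : ∀ z ∈ S.M, SGK S.g S.ginv piF phiF psiF thetaF z)
    {z : Fin (p + q) → ℝ} (hz : z ∈ S.M) {a : Fin p} (ha : pd S.f a (bpt z) ≠ 0) :
    ∀ δ α β γ : Fin q, Riem S.gtil S.gtinv (fpt z) δ α β γ
      = (S.Qq (bpt z) / 2 + S.mu a (bpt z) / pd S.f a (bpt z))
          * (S.gtil (fpt z) δ β * S.gtil (fpt z) γ α
              - S.gtil (fpt z) δ γ * S.gtil (fpt z) β α) := by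
  intro δ α β γ
  have hf0 : S.f (bpt z) ≠ 0 := ne_of_gt (S.hfpos _ (S.mem1 hz))
  have E := hsgk z hz (Fin.castAdd q a) (Fin.natAdd p α) (Fin.natAdd p β) (Fin.natAdd p γ)
    (Fin.natAdd p δ)
  simp only [cov4, KN] at E
  have h0 : pd (fun y => Riem S.g S.ginv y (Fin.castAdd q a) (Fin.natAdd p α) (Fin.natAdd p β)
      (Fin.natAdd p γ)) (Fin.natAdd p δ) z = 0 :=
    pd_zero_of_eqOn S.hM hz (fun y hy => S.Riem_bfff hy a α β γ) _
  rw [h0] at E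
  simp only [Fin.sum_univ_add] at E
  simp only [S.Gam_bfb hz, S.Gam_ffb hz, S.Gam_bff hz, S.Gam_fff hz, S.Riem_bfff hz,
    S.Riem_bbff hz, S.Riem_bfbf hz, S.Riem_bffb hz, S.Riem_ffff hz, S.Ric_mixed hz,
    S.g_bf, S.g_fb, zero_mul, mul_zero, ite_mul, zero_add, add_zero, Finset.sum_const_zero,
    sub_zero, zero_sub, Finset.sum_ite_eq', Finset.mem_univ, if_true] at E
  rw [sum_rearr2, sum_rearr3, ← S.mu_def] at E
  have hfq_eq : S.hfq a (bpt z) = pd S.f a (bpt z) / (2 * S.f (bpt z)) := rfl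
  rw [hfq_eq] at E
  field_simp at E
  have hfp := S.hfpos _ (S.mem1 hz)
  have h8 : (8 : ℝ) * S.f (bpt z) ≠ 0 := by positivity
  have E' : (8 * S.f (bpt z)) * (pd S.f a (bpt z) * Riem S.gtil S.gtinv (fpt z) δ α β γ)
      = (8 * S.f (bpt z)) * ((pd S.f a (bpt z) * S.Qq (bpt z) / 2 + S.mu a (bpt z)) *
          (S.gtil (fpt z) δ β * S.gtil (fpt z) γ α
            - S.gtil (fpt z) δ γ * S.gtil (fpt z) β α)) := by
    linear_combination (-4 * S.f (bpt z)) * E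
  have E2 := mul_left_cancel₀ h8 E'
  refine mul_left_cancel₀ ha ?_
  rw [E2]
  field_simp

end Setup
end WPaux

/-- Corollary 4.1(vi): the fiber of a warped product SGK manifold is of constant curvature
wherever df is nonzero. -/
theorem fiber_of_warped_SGK_constant_curvature
    {p q : ℕ} (hp : 1 ≤ p) (hq : 1 ≤ q)
    (U : Set (Fin p → ℝ)) (V : Set (Fin q → ℝ))
    (hU : IsOpen U) (hV : IsOpen V)
    (gbar gbinv : (Fin p → ℝ) → Fin p → Fin p → ℝ)
    (gtil gtinv : (Fin q → ℝ) → Fin q → Fin q → ℝ)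
    (f : (Fin p → ℝ) → ℝ)
    (hgb : ∀ a b, ContDiffOn ℝ (⊤ : ℕ∞) (fun x => gbar x a b) U)
    (hgbs : ∀ x ∈ U, ∀ a b, gbar x a b = gbar x b a)
    (hgbi : ∀ x ∈ U, ∀ a b, (∑ c, gbar x a c * gbinv x c b) = if a = b then (1 : ℝ) else 0)
    (hgt : ∀ a b, ContDiffOn ℝ (⊤ : ℕ∞) (fun y => gtil y a b) V)
    (hgts : ∀ y ∈ V, ∀ a b, gtil y a b = gtil y b a)
    (hgti : ∀ y ∈ V, ∀ a b, (∑ c, gtil y a c * gtinv y c b) = if a = b then (1 : ℝ) else 0)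
    (hf : ContDiffOn ℝ (⊤ : ℕ∞) f U)
    (hfpos : ∀ x ∈ U, 0 < f x)
    (piF phiF psiF thetaF : (Fin (p + q) → ℝ) → Fin (p + q) → ℝ)
    (hpiF : ∀ m, ContDiffOn ℝ (⊤ : ℕ∞) (fun z => piF z m) (Mset U V))
    (hphiF : ∀ m, ContDiffOn ℝ (⊤ : ℕ∞) (fun z => phiF z m) (Mset U V))
    (hpsiF : ∀ m, ContDiffOn ℝ (⊤ : ℕ∞) (fun z => psiF z m) (Mset U V))
    (hthetaF : ∀ m, ContDiffOn ℝ (⊤ : ℕ∞) (fun z => thetaF z m) (Mset U V))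
    (hsgk : ∀ z ∈ Mset U V, SGK (wMet gbar gtil f) (wMetInv gbinv gtinv f) piF phiF psiF thetaF z) :
    ∀ z ∈ Mset U V, (∃ a : Fin p, pd f a (bpt z) ≠ 0) →
      ∃ c : ℝ, ∀ α β γ δ : Fin q,
        Riem gtil gtinv (fpt z) α β γ δ = c * Gt gtil (fpt z) α β γ δ := by
  intro z hz hdf
  obtain ⟨a, ha⟩ := hdf
  let S : WPaux.Setup p q := ⟨U, V, hU, hV, gbar, gbinv, gtil, gtinv, f,
    hgb, hgbs, hgbi, hgt, hgts, hgti, hf, hfpos⟩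
  have hzM : z ∈ S.M := hz
  have hkey : ∀ δ α β γ : Fin q, Riem gtil gtinv (fpt z) δ α β γ
      = (S.Qq (bpt z) / 2 + S.mu a (bpt z) / pd f a (bpt z))
        * (gtil (fpt z) δ β * gtil (fpt z) γ α - gtil (fpt z) δ γ * gtil (fpt z) β α) :=
    S.fiber_const_curv piF phiF psiF thetaF (fun z hz => hsgk z hz) hzM ha
  refine ⟨-(S.Qq (bpt z) / 2 + S.mu a (bpt z) / pd f a (bpt z)), fun α β γ δ => ?_⟩
  rw [hkey α β γ δ]
  have hs1 : gtil (fpt z) δ β = gtil (fpt z) β δ := hgts _ hz.2 δ β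
  have hs2 : gtil (fpt z) γ β = gtil (fpt z) β γ := hgts _ hz.2 γ β
  simp only [Gt]
  rw [hs1, hs2]
  ring
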